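/- If θ₁,...,θ_r are real numbers such that 1, θ₁,...,θ_r are linearly independent over ℚ, then the set {({mθ₁},...,{mθ_r}) : m ∈ ℕ} of vectors of fractional parts is dense in [0,1]^r. (Kronecker's approximation theorem.) -/

import Mathlib

open MeasureTheory AddCircle Finset Filter Topology ComplexConjugate

noncomputable section

namespace KroneckerAux

instance : IsProbabilityMeasure (volume : Measure (AddCircle (1:ℝ))) :=
  ⟨by rw [AddCircle.measure_univ]; norm_num⟩

variable {r : ℕ}

abbrev X (r : ℕ) := Fin r → AddCircle (1:ℝ)

lemma integrable_cm {E : Type*} [NormedAddCommGroup E] [NormedSpace ℝ E] (f : C(X r, E)) :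
    Integrable f :=
  f.continuous.integrable_of_hasCompactSupport (HasCompactSupport.of_compactSpace _)

/-- The character on the torus attached to an integer vector. -/
def chi (n : Fin r → ℤ) : C(X r, ℂ) :=
  ⟨fun t => ∏ i, fourier (n i) (t i),
    continuous_finset_prod _ fun i _ =>
      (fourier (n i)).continuous.comp (continuous_apply i)⟩

lemma chi_apply (n : Fin r → ℤ) (t : X r) : chi n t = ∏ i, fourier (n i) (t i) := rfl

lemma chi_zero : (chi (0 : Fin r → ℤ)) = 1 := by
  ext t; simp [chi_apply, fourier_zero]

lemma chi_mul (n m : Fin r → ℤ) : chi n * chi m = chi (n + m) := by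
  ext t
  simp only [ContinuousMap.mul_apply, chi_apply, Pi.add_apply, fourier_add]
  rw [← Finset.prod_mul_distrib]

lemma chi_star (n : Fin r → ℤ) : star (chi n) = chi (-n) := by
  ext t
  simp only [ContinuousMap.star_apply, chi_apply, Pi.neg_apply, fourier_neg]
  rw [← map_prod (starRingEnd ℂ)]
  rfl

lemma fourier_add_arg (k : ℤ) (a b : AddCircle (1:ℝ)) :
    fourier k (a + b) = fourier k a * fourier k b := by
  simp only [fourier_apply, smul_add, toCircle_add, Circle.coe_mul]

lemma chi_add_arg (n : Fin r → ℤ) (a b : X r) : chi n (a + b) = chi n a * chi n b := by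
  simp only [chi_apply, Pi.add_apply, fourier_add_arg, Finset.prod_mul_distrib]

lemma chi_zero_arg (n : Fin r → ℤ) : chi n (0 : X r) = 1 := by
  simp [chi_apply, fourier_eval_zero]

lemma chi_nsmul (n : Fin r → ℤ) (t : X r) (m : ℕ) : chi n (m • t) = chi n t ^ m := by
  induction m with
  | zero => simpa using chi_zero_arg n
  | succ m ih => rw [succ_nsmul, chi_add_arg, ih, pow_succ]

lemma norm_chi (n : Fin r → ℤ) (t : X r) : ‖chi n t‖ = 1 := by
  rw [chi_apply, norm_prod]
  exact Finset.prod_eq_one fun i _ => Circle.norm_coe _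

/-- The span of the characters. -/
def V (r : ℕ) : Submodule ℂ C(X r, ℂ) := Submodule.span ℂ (Set.range (chi (r := r)))

lemma chi_mem_V (n : Fin r → ℤ) : chi n ∈ V r :=
  Submodule.subset_span ⟨n, rfl⟩

lemma one_mem_V : (1 : C(X r, ℂ)) ∈ V r := chi_zero ▸ chi_mem_V 0

lemma mul_mem_V {f g : C(X r, ℂ)} (hf : f ∈ V r) (hg : g ∈ V r) : f * g ∈ V r := by
  induction hf using Submodule.span_induction with
  | mem f hf =>
    obtain ⟨n, rfl⟩ := hf
    induction hg using Submodule.span_induction with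
    | mem g hg => obtain ⟨m, rfl⟩ := hg; rw [chi_mul]; exact chi_mem_V _
    | zero => rw [mul_zero]; exact zero_mem _
    | add a b _ _ ha hb => rw [mul_add]; exact add_mem ha hb
    | smul c a _ ha => rw [mul_smul_comm]; exact Submodule.smul_mem _ _ ha
  | zero => rw [zero_mul]; exact zero_mem _
  | add a b _ _ ha hb => rw [add_mul]; exact add_mem ha hb
  | smul c a _ ha => rw [smul_mul_assoc]; exact Submodule.smul_mem _ _ ha

lemma star_mem_V {f : C(X r, ℂ)} (hf : f ∈ V r) : star f ∈ V r := by
  induction hf using Submodule.span_induction with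
  | mem f hf => obtain ⟨n, rfl⟩ := hf; rw [chi_star]; exact chi_mem_V _
  | zero => rw [star_zero]; exact zero_mem _
  | add a b _ _ ha hb => rw [star_add]; exact add_mem ha hb
  | smul c a _ ha => rw [star_smul]; exact Submodule.smul_mem _ _ ha

/-- The star subalgebra of trigonometric polynomials. -/
def S (r : ℕ) : StarSubalgebra ℂ C(X r, ℂ) where
  toSubalgebra := (V r).toSubalgebra one_mem_V fun _ _ hf hg => mul_mem_V hf hg
  star_mem' := star_mem_V

lemma S_separatesPoints : (S r).SeparatesPoints := by
  intro t s hts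
  obtain ⟨i, hi⟩ : ∃ i, t i ≠ s i := by
    by_contra h
    push_neg at h
    exact hts (funext h)
  refine ⟨_, ⟨chi (Pi.single i 1), chi_mem_V _, rfl⟩, ?_⟩
  have key : ∀ u : X r, chi (Pi.single i 1) u = fourier 1 (u i) := by
    intro u
    rw [chi_apply,
      Finset.prod_eq_single i (fun j _ hj => by simp [Pi.single_eq_of_ne hj, fourier_zero])
        (fun h => absurd (mem_univ i) h)]
    simp
  simp only [key]
  rw [fourier_one, fourier_one]
  intro h
  exact hi (injective_toCircle one_ne_zero (Subtype.ext h))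

lemma integral_chi {n : Fin r → ℤ} (hn : n ≠ 0) : ∫ t : X r, chi n t = 0 := by
  obtain ⟨j, hj⟩ : ∃ j, n j ≠ 0 := by
    by_contra h
    push_neg at h
    exact hn (funext h)
  have h1 : ∫ t : X r, chi n t = ∏ i, ∫ x : AddCircle (1:ℝ), fourier (n i) x := by
    simp only [chi_apply]; exact
      MeasureTheory.integral_fintype_prod_eq_prod (ι := Fin r)
        (fun i (x : AddCircle (1:ℝ)) => (fourier (n i) x : ℂ))
  rw [h1]
  refine Finset.prod_eq_zero (mem_univ j) ?_
  exact integral_eq_zero_of_add_right_eq_neg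
    (fun x => fourier_add_half_inv_index hj one_pos x)

section Theta

variable (θ : Fin r → ℝ)

/-- The image of `θ` on the torus. -/
def tb : X r := fun i => ((θ i : ℝ) : AddCircle (1:ℝ))

lemma chi_tb_ne_one
    (hind : ∀ (c : ℚ) (cf : Fin r → ℚ),
      (c : ℝ) + ∑ i, (cf i : ℝ) * θ i = 0 → c = 0 ∧ ∀ i, cf i = 0)
    {n : Fin r → ℤ} (hn : n ≠ 0) : chi n (tb θ) ≠ 1 := by
  intro h
  rw [chi_apply] at h
  simp only [tb, fourier_coe_apply, Complex.ofReal_one, div_one] at h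
  rw [← Complex.exp_sum, Complex.exp_eq_one_iff] at h
  obtain ⟨k, hk⟩ := h
  have hne : (2 * (Real.pi : ℂ) * Complex.I) ≠ 0 := by
    simp [Real.pi_ne_zero, Complex.I_ne_zero]
  have hk' : (2 * (Real.pi : ℂ) * Complex.I) * ((∑ i, (n i : ℝ) * θ i : ℝ) : ℂ)
      = (2 * (Real.pi : ℂ) * Complex.I) * ((k : ℝ) : ℂ) := by
    rw [show (2 * (Real.pi : ℂ) * Complex.I) * ((k : ℝ) : ℂ) = (k : ℂ) * (2 * Real.pi * Complex.I)
      by push_cast; ring, ← hk]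
    push_cast
    rw [Finset.mul_sum]
    exact Finset.sum_congr rfl fun i _ => by ring
  have h2 : ∑ i, (n i : ℝ) * θ i = (k : ℝ) := by
    exact_mod_cast mul_left_cancel₀ hne hk'
  have h3 := hind (-(k : ℚ)) (fun i => (n i : ℚ)) (by push_cast; linarith)
  refine hn (funext fun i => ?_)
  have h4 : ((n i : ℚ)) = 0 := h3.2 i
  simpa using (by exact_mod_cast h4 : n i = 0)

/-- The Birkhoff average along the orbit of `θ`. -/
def avg (f : C(X r, ℂ)) (N : ℕ) : ℂ := (∑ m ∈ Finset.range N, f ((m : ℕ) • tb θ)) / N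

lemma avg_add (f g : C(X r, ℂ)) (N : ℕ) :
    avg θ (f + g) N = avg θ f N + avg θ g N := by
  simp [avg, Finset.sum_add_distrib, add_div]

lemma avg_smul (c : ℂ) (f : C(X r, ℂ)) (N : ℕ) : avg θ (c • f) N = c * avg θ f N := by
  simp only [avg, ContinuousMap.smul_apply, smul_eq_mul, ← Finset.mul_sum, mul_div_assoc]

lemma avg_sub_le (f g : C(X r, ℂ)) (N : ℕ) : ‖avg θ f N - avg θ g N‖ ≤ dist f g := by
  rcases Nat.eq_zero_or_pos N with h | h
  · simp [avg, h, dist_nonneg]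
  · have hNpos : (0:ℝ) < N := by exact_mod_cast h
    have heq : avg θ f N - avg θ g N
        = (∑ m ∈ Finset.range N, (f (m • tb θ) - g (m • tb θ))) / N := by
      simp [avg, Finset.sum_sub_distrib, sub_div]
    rw [heq, norm_div, Complex.norm_natCast, div_le_iff₀ hNpos]
    refine le_trans (norm_sum_le _ _) ?_
    have hb : ∀ m ∈ Finset.range N, ‖f (m • tb θ) - g (m • tb θ)‖ ≤ dist f g := fun m _ => by
      rw [← dist_eq_norm]; exact ContinuousMap.dist_apply_le_dist _
    refine le_trans (Finset.sum_le_sum hb) ?_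
    rw [Finset.sum_const, Finset.card_range, nsmul_eq_mul, mul_comm]

/-- Weyl convergence property. -/
def P (f : C(X r, ℂ)) : Prop := Tendsto (avg θ f) atTop (𝓝 (∫ t : X r, f t))

lemma P_chi
    (hind : ∀ (c : ℚ) (cf : Fin r → ℚ),
      (c : ℝ) + ∑ i, (cf i : ℝ) * θ i = 0 → c = 0 ∧ ∀ i, cf i = 0)
    (n : Fin r → ℤ) : P θ (chi n) := by
  rcases eq_or_ne n 0 with rfl | hn
  · have h1 : ∀ N : ℕ, 1 ≤ N → avg θ (chi 0) N = 1 := by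
      intro N hN
      simp only [avg, chi_zero, ContinuousMap.one_apply, Finset.sum_const, Finset.card_range,
        nsmul_eq_mul, mul_one]
      rw [div_self]
      exact_mod_cast Nat.one_le_iff_ne_zero.mp hN
    have h2 : (∫ t : X r, chi (0 : Fin r → ℤ) t) = 1 := by
      simp [chi_zero, measure_univ]
    rw [P, h2]
    refine Tendsto.congr' ?_ tendsto_const_nhds
    filter_upwards [eventually_ge_atTop 1] with N hN
    exact (h1 N hN).symm
  · rw [P, integral_chi hn]
    set z : ℂ := chi n (tb θ) with hz
    have hz1 : z ≠ 1 := chi_tb_ne_one θ hind hn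
    have hzn : ‖z‖ = 1 := norm_chi n (tb θ)
    have havg : ∀ N : ℕ, avg θ (chi n) N = (z ^ N - 1) / (z - 1) / N := by
      intro N
      simp only [avg, chi_nsmul, ← hz, geom_sum_eq hz1]
    refine Tendsto.congr (fun N => (havg N).symm) ?_
    have hbound : ∀ N : ℕ, ‖(z ^ N - 1) / (z - 1) / (N : ℂ)‖ ≤ 2 / ‖z - 1‖ * (N : ℝ)⁻¹ := by
      intro N
      rw [norm_div, norm_div, Complex.norm_natCast, div_div, div_eq_mul_inv (2 : ℝ),
        mul_assoc, ← mul_inv, mul_comm ‖z - 1‖, div_eq_mul_inv]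
      gcongr
      calc ‖z ^ N - 1‖ ≤ ‖z ^ N‖ + 1 := by
            simpa using norm_sub_le (z ^ N) 1
        _ = 2 := by rw [norm_pow, hzn, one_pow]; norm_num
    refine squeeze_zero_norm hbound ?_
    have := (tendsto_inv_atTop_nhds_zero_nat (𝕜 := ℝ)).const_mul (2 / ‖z - 1‖)
    simpa using this

lemma P_all
    (hind : ∀ (c : ℚ) (cf : Fin r → ℚ),
      (c : ℝ) + ∑ i, (cf i : ℝ) * θ i = 0 → c = 0 ∧ ∀ i, cf i = 0)
    (f : C(X r, ℂ)) : P θ f := by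
  have hspan : ∀ g ∈ V r, P θ g := by
    intro g hg
    induction hg using Submodule.span_induction with
    | mem g hgm => obtain ⟨n, rfl⟩ := hgm; exact P_chi θ hind n
    | zero =>
        have hz : avg θ (0 : C(X r, ℂ)) = fun _ => (0 : ℂ) := funext fun N => by
          simp [avg]
        rw [P, hz]
        simp only [ContinuousMap.zero_apply, integral_zero]
        exact tendsto_const_nhds
    | add a b _ _ hpa hpb =>
        have hi : ∫ t : X r, (a + b) t = (∫ t : X r, a t) + ∫ t : X r, b t := by
          simp only [ContinuousMap.add_apply]
          exact integral_add (integrable_cm a) (integrable_cm b)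
        rw [P, hi]
        exact Tendsto.congr (fun N => (avg_add θ a b N).symm) (hpa.add hpb)
    | smul c a _ hpa =>
        have hi : ∫ t : X r, (c • a) t = c * ∫ t : X r, a t := by
          simp only [ContinuousMap.smul_apply, smul_eq_mul]
          exact integral_const_mul c _
        rw [P, hi]
        exact Tendsto.congr (fun N => (avg_smul θ c a N).symm) (hpa.const_mul c)
  have hdense : f ∈ closure ((V r : Set C(X r, ℂ))) := by
    have h := ContinuousMap.starSubalgebra_topologicalClosure_eq_top_of_separatesPoints
      (S r) S_separatesPoints
    have h2 : f ∈ (S r).topologicalClosure := h ▸ Set.mem_univ f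
    rwa [← StarSubalgebra.mem_toSubalgebra, ← Subalgebra.mem_carrier] at h2
  rw [P, Metric.tendsto_atTop]
  intro ε hε
  obtain ⟨g, hgV, hgd⟩ : ∃ g ∈ (V r : Set C(X r, ℂ)), dist f g < ε / 3 := by
    rw [Metric.mem_closure_iff] at hdense
    exact hdense (ε / 3) (by linarith)
  have hPg := hspan g hgV
  rw [P, Metric.tendsto_atTop] at hPg
  obtain ⟨N₀, hN₀⟩ := hPg (ε / 3) (by linarith)
  refine ⟨N₀, fun N hN => ?_⟩
  have h1 : ‖avg θ f N - avg θ g N‖ ≤ dist f g := avg_sub_le θ f g N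
  have h2 : dist (avg θ g N) (∫ t : X r, g t) < ε / 3 := hN₀ N hN
  have h3 : ‖(∫ t : X r, f t) - ∫ t : X r, g t‖ ≤ dist f g := by
    rw [← integral_sub (integrable_cm f) (integrable_cm g)]
    calc ‖∫ t : X r, (f t - g t)‖ ≤ dist f g * (volume (Set.univ : Set (X r))).toReal := by
          refine norm_integral_le_of_norm_le_const (Eventually.of_forall fun t => ?_)
          rw [← dist_eq_norm]
          exact ContinuousMap.dist_apply_le_dist _
      _ = dist f g := by simp [measure_univ]
  have : dist (avg θ f N) (∫ t : X r, f t) ≤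
      ‖avg θ f N - avg θ g N‖ + dist (avg θ g N) (∫ t : X r, g t)
        + ‖(∫ t : X r, f t) - ∫ t : X r, g t‖ := by
    rw [dist_eq_norm, dist_eq_norm]
    calc ‖avg θ f N - ∫ t : X r, f t‖
        = ‖(avg θ f N - avg θ g N) + (avg θ g N - ∫ t : X r, g t)
            - ((∫ t : X r, f t) - ∫ t : X r, g t)‖ := by ring_nf
      _ ≤ _ := by
          refine le_trans (norm_sub_le _ _) ?_
          gcongr
          exact norm_add_le _ _
  linarith

end Theta

end KroneckerAux

end

open KroneckerAux MeasureTheory Finset in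
theorem kronecker_approximation {r : ℕ} (θ : Fin r → ℝ)
    (hind : ∀ (c : ℚ) (cf : Fin r → ℚ),
      (c : ℝ) + ∑ i, (cf i : ℝ) * θ i = 0 → c = 0 ∧ ∀ i, cf i = 0) :
    ∀ x : Fin r → ℝ, (∀ i, x i ∈ Set.Icc (0 : ℝ) 1) → ∀ ε > (0 : ℝ),
      ∃ m : ℕ, ∀ i, |Int.fract ((m : ℝ) * θ i) - x i| < ε := by
  intro x hx ε hε
  rcases lt_or_ge (1 : ℝ) ε with hε1 | hε1
  · refine ⟨0, fun i => ?_⟩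
    have h0 : Int.fract ((0 : ℕ) * θ i) = 0 := by norm_num
    rw [h0, zero_sub, abs_neg, abs_of_nonneg (hx i).1]
    exact lt_of_le_of_lt (hx i).2 hε1
  · set δ : ℝ := ε / 4 with hδdef
    have hδpos : 0 < δ := by positivity
    have hδle : δ ≤ 1 / 4 := by rw [hδdef]; linarith
    set x' : Fin r → ℝ := fun i => min (max (x i) δ) (1 - δ) with hx'def
    have hx'lb : ∀ i, δ ≤ x' i := fun i =>
      le_min (le_max_right _ _) (by linarith)
    have hx'ub : ∀ i, x' i ≤ 1 - δ := fun i => min_le_right _ _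
    have hx'close : ∀ i, |x' i - x i| ≤ δ := by
      intro i
      have h1 := (hx i).1
      have h2 := (hx i).2
      rw [abs_le]
      constructor
      · have : 1 - δ ≥ x i - δ := by linarith
        have hmin : min (max (x i) δ) (1 - δ) ≥ x i - δ := by
          apply le_min <;> [skip; linarith]
          exact le_trans (by linarith) (le_max_left _ _)
        simp only [hx'def]
        linarith [hmin]
      · have hmax : max (x i) δ ≤ x i + δ := max_le (by linarith) (by linarith)
        have : min (max (x i) δ) (1 - δ) ≤ x i + δ := le_trans (min_le_left _ _) hmax
        simp only [hx'def]
        linarith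
    -- the bump function
    set y : X r := fun i => ((x' i : ℝ) : AddCircle (1:ℝ)) with hydef
    set g : C(X r, ℝ) := ⟨fun t => ∏ i, max 0 (δ - ‖t i - y i‖),
      continuous_finset_prod _ fun i _ =>
        continuous_const.max (continuous_const.sub
          (((continuous_apply i).sub continuous_const).norm))⟩ with hgdef
    have hgnn : ∀ t, 0 ≤ g t := by
      intro t
      simp only [hgdef, ContinuousMap.coe_mk]
      exact Finset.prod_nonneg fun i _ => le_max_left _ _
    have hgy : 0 < g y := by
      have : g y = δ ^ r := by
        simp only [hgdef, ContinuousMap.coe_mk, sub_self, norm_zero, sub_zero]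
        rw [Finset.prod_const, max_eq_right hδpos.le, Finset.card_univ, Fintype.card_fin]
      rw [this]
      positivity
    have hint : 0 < ∫ t : X r, g t := by
      rw [integral_pos_iff_support_of_nonneg hgnn (integrable_cm g)]
      have hopen : IsOpen (Function.support g) := by
        rw [Function.support_eq_preimage]
        exact isOpen_compl_singleton.preimage g.continuous
      exact hopen.measure_pos volume ⟨y, hgy.ne'⟩
    set fc : C(X r, ℂ) := ⟨fun t => ((g t : ℝ) : ℂ),
      Complex.continuous_ofReal.comp g.continuous⟩ with hfcdef
    have hP := P_all θ hind fc
    have hex : ∃ m : ℕ, g ((m : ℕ) • tb θ) ≠ 0 := by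
      by_contra hc
      push_neg at hc
      have havg0 : ∀ N, avg θ fc N = 0 := by
        intro N
        simp only [avg, hfcdef, ContinuousMap.coe_mk, hc, Complex.ofReal_zero,
          Finset.sum_const_zero, zero_div]
      rw [P] at hP
      have h0 : (∫ t : X r, fc t) = 0 :=
        tendsto_nhds_unique (Tendsto.congr havg0 hP) tendsto_const_nhds
      have h1 : (∫ t : X r, ((g t : ℝ) : ℂ)) = ((∫ t : X r, g t : ℝ) : ℂ) :=
        integral_ofReal
      have h0' : (∫ t : X r, fc t) = ∫ t : X r, ((g t : ℝ) : ℂ) := rfl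
      have h2 : ((∫ t : X r, g t : ℝ) : ℂ) = 0 := by rw [← h1, ← h0', h0]
      exact absurd (by exact_mod_cast h2) hint.ne'
    obtain ⟨m, hm⟩ := hex
    refine ⟨m, fun i => ?_⟩
    have hgm : 0 < g (m • tb θ) := lt_of_le_of_ne (hgnn _) (Ne.symm hm)
    have hnorm : ‖(m • tb θ) i - y i‖ < δ := by
      by_contra hcon
      push_neg at hcon
      have hzero : max 0 (δ - ‖(m • tb θ) i - y i‖) = 0 := max_eq_left (by linarith)
      have : g (m • tb θ) = 0 := by
        simp only [hgdef, ContinuousMap.coe_mk]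
        exact Finset.prod_eq_zero (mem_univ i) hzero
      exact absurd this hgm.ne'
    -- translate the torus estimate into a fractional-part estimate
    set u : ℝ := Int.fract ((m : ℝ) * θ i) - x' i with hudef
    have hcoe : (m • tb θ) i = ((Int.fract ((m : ℝ) * θ i) : ℝ) : AddCircle (1:ℝ)) := by
      show m • ((θ i : ℝ) : AddCircle (1:ℝ)) = _
      rw [← QuotientAddGroup.mk_nsmul]
      have : (m : ℕ) • θ i = (m : ℝ) * θ i := by
        rw [nsmul_eq_mul]
      rw [this]
      rw [QuotientAddGroup.eq]
      refine ⟨-⌊(m : ℝ) * θ i⌋, ?_⟩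
      simp only [zsmul_eq_mul, mul_one, Int.cast_neg]
      rw [Int.fract]
      push_cast
      ring
    have hnu : ‖((u : ℝ) : AddCircle (1:ℝ))‖ < δ := by
      have : ((u : ℝ) : AddCircle (1:ℝ)) = (m • tb θ) i - y i := by
        rw [hcoe, hydef, hudef]
        push_cast [← QuotientAddGroup.mk_sub]
        rfl
      rw [this]
      exact hnorm
    have hfr0 : 0 ≤ Int.fract ((m : ℝ) * θ i) := Int.fract_nonneg _
    have hfr1 : Int.fract ((m : ℝ) * θ i) < 1 := Int.fract_lt_one _
    have huabs : |u| ≤ 1 - δ := by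
      rw [abs_le]
      constructor
      · have := hx'ub i
        simp only [hudef]
        linarith
      · have := hx'lb i
        simp only [hudef]
        linarith
    have hnorm_eq : ‖((u : ℝ) : AddCircle (1:ℝ))‖ = |u - round u| := by
      rw [AddCircle.norm_eq]
      norm_num
    rw [hnorm_eq] at hnu
    have hnu' : |u - round u| < δ := by
      first
        | exact hnu
        | rwa [abs_sub_comm] at hnu
    have hround : round u = 0 := by
      have h1 : |(round u : ℝ)| < 1 := by
        have h2 : ((round u : ℤ) : ℝ) = u - (u - round u) := by ring
        rw [h2]
        calc |u - (u - (round u : ℝ))| ≤ |u| + |u - (round u : ℝ)| := abs_sub _ _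
          _ < (1 - δ) + δ := add_lt_add_of_le_of_lt huabs hnu'
          _ = 1 := by ring
      have h2 : |round u| < 1 := by exact_mod_cast h1
      rw [abs_lt] at h2
      omega
    have huδ : |u| < δ := by
      have := hnu'
      rw [hround] at this
      simpa using this
    calc |Int.fract ((m : ℝ) * θ i) - x i|
        = |u + (x' i - x i)| := by rw [hudef]; ring_nf
      _ ≤ |u| + |x' i - x i| := abs_add_le _ _
      _ < δ + δ := add_lt_add_of_lt_of_le huδ (hx'close i)
      _ < ε := by rw [hδdef]; linarith
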